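/- Let f = (f_0, …, f_n) be a symmetric signature of arity n and let T = (t_{pq})_{p,q ∈ {0,1}} be an invertible 2 × 2 complex matrix. Define the transformed signature f' = T^{⊗n} f by f'_k = Σ_{x ∈ {0,1}^n} (∏_{i=1}^{n} t_{z(k)_i, x_i}) · f_{|x|}, where |x| denotes the number of 1s among the coordinates of x and z(k) ∈ {0,1}^n is the index whose first k coordinates are 1 and whose remaining coordinates are 0. Then: (1) f satisfies a second order recurrence relation (with some coefficients (a,b,c), not all zero) if and only if f' does; and (2) f satisfies a second order recurrence relation with coefficients (a,b,c) satisfying b² − 4ac ≠ 0 if and only if f' satisfies a second order recurrence relation with coefficients (a',b',c') satisfying b'² − 4a'c' ≠ 0. -/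
import Mathlib


/-- `f` satisfies a second order recurrence relation (with coefficients not all zero). -/
def HasSecondOrderRec (n : ℕ) (f : ℕ → ℂ) : Prop :=
  ∃ a b c : ℂ, (a, b, c) ≠ 0 ∧
    ∀ k, k + 2 ≤ n → a * f k + b * f (k + 1) + c * f (k + 2) = 0

/-- `f` satisfies a second order recurrence relation with coefficients `(a, b, c)`
(not all zero) satisfying `b² - 4ac ≠ 0`. -/
def HasNondegSecondOrderRec (n : ℕ) (f : ℕ → ℂ) : Prop :=
  ∃ a b c : ℂ, (a, b, c) ≠ 0 ∧ b ^ 2 - 4 * a * c ≠ 0 ∧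
    ∀ k, k + 2 ≤ n → a * f k + b * f (k + 1) + c * f (k + 2) = 0

open Finset Matrix

namespace Stmt2Aux

/-- weight of a 0-1 vector -/
def wt {m : ℕ} (x : Fin m → Fin 2) : ℕ := ∑ i, (x i : ℕ)

/-- the canonical vector of weight `k` -/
def zf (m k : ℕ) : Fin m → Fin 2 := fun i => if (i : ℕ) < k then 1 else 0

noncomputable def G (T : Matrix (Fin 2) (Fin 2) ℂ) (m : ℕ) (h : ℕ → ℂ)
    (y : Fin m → Fin 2) : ℂ :=
  ∑ x : Fin m → Fin 2, (∏ i, T (y i) (x i)) * h (wt x)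

lemma wt_le {m : ℕ} (x : Fin m → Fin 2) : wt x ≤ m := by
  have : wt x ≤ ∑ _i : Fin m, 1 := by
    apply Finset.sum_le_sum
    intro i _
    exact Nat.lt_succ_iff.mp (x i).isLt
  simpa using this

lemma card_filter_eq_wt {m : ℕ} (x : Fin m → Fin 2) :
    (Finset.univ.filter (fun i => x i = 1)).card = wt x := by
  rw [Finset.card_filter]
  apply Finset.sum_congr rfl
  intro i _
  have : ∀ v : Fin 2, (if v = 1 then 1 else 0) = (v : ℕ) := by decide
  exact this (x i)

lemma wt_comp_perm {m : ℕ} (x : Fin m → Fin 2) (σ : Equiv.Perm (Fin m)) :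
    wt (x ∘ σ) = wt x := by
  unfold wt
  exact Equiv.sum_comp σ (fun i => (x i : ℕ))

lemma wt_snoc {m : ℕ} (x : Fin m → Fin 2) (v : Fin 2) :
    wt (Fin.snoc x v) = wt x + (v : ℕ) := by
  unfold wt
  rw [Fin.sum_univ_castSucc]
  simp [Fin.snoc_castSucc, Fin.snoc_last]

lemma card_zf {m k : ℕ} (hk : k ≤ m) :
    (Finset.univ.filter (fun i : Fin m => (i : ℕ) < k)).card = k := by
  have he : (Finset.univ.filter (fun i : Fin m => (i : ℕ) < k)) =
      (Finset.range k).attachFin (fun a ha => lt_of_lt_of_le (Finset.mem_range.mp ha) hk) := by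
    ext i
    simp [Finset.mem_attachFin]
  rw [he, Finset.card_attachFin, Finset.card_range]

lemma wt_zf {m k : ℕ} (hk : k ≤ m) : wt (zf m k) = k := by
  have hset : Finset.univ.filter (fun i => zf m k i = 1)
      = Finset.univ.filter (fun i : Fin m => (i : ℕ) < k) := by
    ext i
    by_cases h : (i : ℕ) < k <;> simp [zf, h]
  rw [← card_filter_eq_wt, hset, card_zf hk]

lemma exists_perm {m : ℕ} (y : Fin m → Fin 2) :
    ∃ σ : Equiv.Perm (Fin m), ∀ i, y (σ i) = zf m (wt y) i := by
  classical
  set k := wt y with hkdef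
  have hk : k ≤ m := wt_le y
  have hcq : Fintype.card {i : Fin m // (i : ℕ) < k} = k := by
    rw [Fintype.card_subtype]
    exact card_zf hk
  have hcp : Fintype.card {i : Fin m // y i = 1} = k := by
    rw [Fintype.card_subtype, card_filter_eq_wt]
  have e₁ : {i : Fin m // (i : ℕ) < k} ≃ {i : Fin m // y i = 1} :=
    Fintype.equivOfCardEq (by rw [hcq, hcp])
  have e₂ : {i : Fin m // ¬ ((i : ℕ) < k)} ≃ {i : Fin m // ¬ (y i = 1)} :=
    Fintype.equivOfCardEq (by
      rw [Fintype.card_subtype_compl, Fintype.card_subtype_compl, hcq, hcp])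
  refine ⟨Equiv.subtypeCongr e₁ e₂, fun i => ?_⟩
  by_cases h : (i : ℕ) < k
  · have h1 : Equiv.subtypeCongr e₁ e₂ i = (e₁ ⟨i, h⟩ : Fin m) := by
      simp [Equiv.subtypeCongr, h]
    rw [h1]
    have := (e₁ ⟨i, h⟩).2
    simp [zf, h, this]
  · have h1 : Equiv.subtypeCongr e₁ e₂ i = (e₂ ⟨i, h⟩ : Fin m) := by
      simp [Equiv.subtypeCongr, h]
    rw [h1]
    have h2 := (e₂ ⟨i, h⟩).2
    have h3 : ∀ v : Fin 2, v ≠ 1 → v = 0 := by decide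
    simp [zf, h, h3 _ h2]

lemma G_comp_perm (T : Matrix (Fin 2) (Fin 2) ℂ) {m : ℕ} (h : ℕ → ℂ)
    (y : Fin m → Fin 2) (σ : Equiv.Perm (Fin m)) :
    G T m h (y ∘ σ) = G T m h y := by
  unfold G
  have e : (Fin m → Fin 2) ≃ (Fin m → Fin 2) :=
    Equiv.arrowCongr σ.symm (Equiv.refl (Fin 2))
  rw [← Equiv.sum_comp (Equiv.arrowCongr σ.symm (Equiv.refl (Fin 2)))
    (fun x => (∏ i, T ((y ∘ σ) i) (x i)) * h (wt x))]
  apply Finset.sum_congr rfl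
  intro x _
  have hx : (Equiv.arrowCongr σ.symm (Equiv.refl (Fin 2))) x = x ∘ σ := by
    funext i; simp [Equiv.arrowCongr]
  rw [hx, wt_comp_perm]
  congr 1
  exact Equiv.prod_comp σ (fun j => T (y j) (x j))

lemma G_eq_zf (T : Matrix (Fin 2) (Fin 2) ℂ) {m : ℕ} (h : ℕ → ℂ) (y : Fin m → Fin 2) :
    G T m h y = G T m h (zf m (wt y)) := by
  obtain ⟨σ, hσ⟩ := exists_perm y
  have hz : zf m (wt y) = y ∘ σ := funext fun i => (hσ i).symm
  rw [hz, G_comp_perm]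

lemma sum_snoc {j : ℕ} (F : (Fin (j + 1) → Fin 2) → ℂ) :
    ∑ X : Fin (j + 1) → Fin 2, F X
      = ∑ x : Fin j → Fin 2, ∑ v : Fin 2, F (Fin.snoc x v) := by
  rw [← Equiv.sum_comp (Fin.snocEquiv (fun _ => Fin 2)) F, Fintype.sum_prod_type]
  rw [Finset.sum_comm]
  apply Finset.sum_congr rfl
  intro x _
  apply Finset.sum_congr rfl
  intro v _
  rfl

lemma sum_prod {m : ℕ} (A : Fin m → Fin 2 → ℂ) :
    ∑ y : Fin m → Fin 2, ∏ i, A i (y i) = ∏ i, ∑ u, A i u := by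
  induction m with
  | zero => simp
  | succ j ih =>
    rw [sum_snoc (fun y => ∏ i, A i (y i))]
    rw [Fin.prod_univ_castSucc (f := fun i => ∑ u, A i u)]
    rw [← ih (fun i u => A i.castSucc u)]
    rw [Finset.sum_mul_sum]
    apply Finset.sum_congr rfl
    intro x _
    apply Finset.sum_congr rfl
    intro v _
    have : (∏ i, A i ((Fin.snoc x v : Fin (j + 1) → Fin 2) i))
        = (∏ i : Fin j, A i.castSucc ((Fin.snoc x v : Fin (j + 1) → Fin 2) i.castSucc))
          * A (Fin.last j) ((Fin.snoc x v : Fin (j + 1) → Fin 2) (Fin.last j)) :=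
      Fin.prod_univ_castSucc (f := fun i => A i ((Fin.snoc x v : Fin (j + 1) → Fin 2) i))
    rw [this]
    simp [Fin.snoc_castSucc, Fin.snoc_last]

lemma inv_transform {m : ℕ} (S T : Matrix (Fin 2) (Fin 2) ℂ) (hST : S * T = 1)
    (h : ℕ → ℂ) (z : Fin m → Fin 2) :
    ∑ y : Fin m → Fin 2, (∏ i, S (z i) (y i)) * G T m h y = h (wt z) := by
  unfold G
  have step1 : ∀ y : Fin m → Fin 2,
      (∏ i, S (z i) (y i)) * ∑ x : Fin m → Fin 2, (∏ i, T (y i) (x i)) * h (wt x)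
      = ∑ x : Fin m → Fin 2, (∏ i, S (z i) (y i) * T (y i) (x i)) * h (wt x) := by
    intro y
    rw [Finset.mul_sum]
    apply Finset.sum_congr rfl
    intro x _
    rw [← mul_assoc, ← Finset.prod_mul_distrib]
  simp_rw [step1]
  rw [Finset.sum_comm]
  have step2 : ∀ x : Fin m → Fin 2,
      ∑ y : Fin m → Fin 2, (∏ i, S (z i) (y i) * T (y i) (x i)) * h (wt x)
      = (∏ i, (S * T) (z i) (x i)) * h (wt x) := by
    intro x
    rw [← Finset.sum_mul]
    congr 1
    rw [sum_prod (fun i u => S (z i) u * T u (x i))]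
    apply Finset.prod_congr rfl
    intro i _
    rw [Matrix.mul_apply]
  simp_rw [step2, hST]
  rw [Finset.sum_eq_single z]
  · simp [Matrix.one_apply]
  · intro x _ hx
    have : ∃ i, z i ≠ x i := by
      by_contra hc
      push_neg at hc
      exact hx (funext fun i => (hc i).symm)
    obtain ⟨i, hi⟩ := this
    have hz0 : (∏ j, (1 : Matrix (Fin 2) (Fin 2) ℂ) (z j) (x j)) = 0 :=
      Finset.prod_eq_zero (Finset.mem_univ i) (Matrix.one_apply_ne hi)
    rw [hz0, zero_mul]
  · intro hz
    exact absurd (Finset.mem_univ z) hz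

lemma key (T : Matrix (Fin 2) (Fin 2) ℂ) {m : ℕ} (h : ℕ → ℂ)
    (M : Matrix (Fin 2) (Fin 2) ℂ) (y : Fin m → Fin 2) :
    ∑ u : Fin 2, ∑ v : Fin 2, M u v
        * G T (m + 2) h (Fin.snoc (Fin.snoc y u : Fin (m + 1) → Fin 2) v)
      = G T m (fun j => ∑ u : Fin 2, ∑ v : Fin 2,
          (Tᵀ * M * T) u v * h (j + (u : ℕ) + (v : ℕ))) y := by
  unfold G
  have expand : ∀ u v : Fin 2,
      ∑ X : Fin (m + 2) → Fin 2,
        (∏ i, T ((Fin.snoc (Fin.snoc y u : Fin (m + 1) → Fin 2) v : Fin (m + 2) → Fin 2) i)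
          (X i)) * h (wt X)
      = ∑ x : Fin m → Fin 2, ∑ u' : Fin 2, ∑ v' : Fin 2,
          ((∏ i, T (y i) (x i)) * T u u' * T v v')
            * h (wt x + (u' : ℕ) + (v' : ℕ)) := by
    intro u v
    set Y : Fin (m + 2) → Fin 2 := (Fin.snoc (Fin.snoc y u : Fin (m + 1) → Fin 2) v) with hY
    rw [sum_snoc (fun X => (∏ i, T (Y i) (X i)) * h (wt X))]
    rw [sum_snoc (fun X => ∑ v' : Fin 2,
      (∏ i, T (Y i) ((Fin.snoc X v' : Fin (m + 2) → Fin 2) i))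
        * h (wt (Fin.snoc X v' : Fin (m + 2) → Fin 2)))]
    apply Finset.sum_congr rfl; intro x _
    apply Finset.sum_congr rfl; intro u' _
    apply Finset.sum_congr rfl; intro v' _
    rw [wt_snoc, wt_snoc]
    congr 1
    have h1 : (∏ i, T (Y i) ((Fin.snoc (Fin.snoc x u' : Fin (m + 1) → Fin 2) v'
          : Fin (m + 2) → Fin 2) i))
        = (∏ i : Fin (m + 1), T (Y i.castSucc)
            ((Fin.snoc (Fin.snoc x u' : Fin (m + 1) → Fin 2) v'
              : Fin (m + 2) → Fin 2) i.castSucc))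
          * T (Y (Fin.last (m + 1)))
            ((Fin.snoc (Fin.snoc x u' : Fin (m + 1) → Fin 2) v'
              : Fin (m + 2) → Fin 2) (Fin.last (m + 1))) :=
      Fin.prod_univ_castSucc (f := fun i => T (Y i)
        ((Fin.snoc (Fin.snoc x u' : Fin (m + 1) → Fin 2) v' : Fin (m + 2) → Fin 2) i))
    rw [h1, hY]
    simp only [Fin.snoc_castSucc, Fin.snoc_last]
    have h2 : (∏ i : Fin (m + 1), T ((Fin.snoc y u : Fin (m + 1) → Fin 2) i)
          ((Fin.snoc x u' : Fin (m + 1) → Fin 2) i))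
        = (∏ i : Fin m, T ((Fin.snoc y u : Fin (m + 1) → Fin 2) i.castSucc)
            ((Fin.snoc x u' : Fin (m + 1) → Fin 2) i.castSucc))
          * T ((Fin.snoc y u : Fin (m + 1) → Fin 2) (Fin.last m))
            ((Fin.snoc x u' : Fin (m + 1) → Fin 2) (Fin.last m)) :=
      Fin.prod_univ_castSucc (f := fun i => T ((Fin.snoc y u : Fin (m + 1) → Fin 2) i)
        ((Fin.snoc x u' : Fin (m + 1) → Fin 2) i))
    rw [h2]
    simp only [Fin.snoc_castSucc, Fin.snoc_last]
  simp_rw [expand]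
  simp only [Fin.sum_univ_two, Matrix.mul_apply, Matrix.transpose_apply, Fin.val_zero,
    Fin.val_one, add_zero, Finset.mul_sum, ← Finset.sum_add_distrib]
  apply Finset.sum_congr rfl
  intro x _
  ring

lemma transfer {n : ℕ} (f f' : ℕ → ℂ) (T : Matrix (Fin 2) (Fin 2) ℂ)
    (hf' : ∀ k ≤ n, f' k = G T n f (zf n k)) (M' : Matrix (Fin 2) (Fin 2) ℂ)
    (hM : ∀ k, k + 2 ≤ n →
      ∑ u : Fin 2, ∑ v : Fin 2, (Tᵀ * M' * T) u v * f (k + (u : ℕ) + (v : ℕ)) = 0) :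
    ∀ k, k + 2 ≤ n →
      ∑ u : Fin 2, ∑ v : Fin 2, M' u v * f' (k + (u : ℕ) + (v : ℕ)) = 0 := by
  intro k hk
  obtain ⟨m, rfl⟩ : ∃ m, n = m + 2 := ⟨n - 2, by omega⟩
  have hk' : k ≤ m := by omega
  have hfv : ∀ u v : Fin 2, f' (k + (u : ℕ) + (v : ℕ))
      = G T (m + 2) f (Fin.snoc (Fin.snoc (zf m k) u : Fin (m + 1) → Fin 2) v) := by
    intro u v
    have hle : k + (u : ℕ) + (v : ℕ) ≤ m + 2 := by
      have := u.isLt; have := v.isLt; omega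
    have hw : wt (Fin.snoc (Fin.snoc (zf m k) u : Fin (m + 1) → Fin 2) v)
        = k + (u : ℕ) + (v : ℕ) := by
      rw [wt_snoc, wt_snoc, wt_zf hk']
    rw [hf' _ hle,
      G_eq_zf T f (Fin.snoc (Fin.snoc (zf m k) u : Fin (m + 1) → Fin 2) v), hw]
  calc ∑ u : Fin 2, ∑ v : Fin 2, M' u v * f' (k + (u : ℕ) + (v : ℕ))
      = ∑ u : Fin 2, ∑ v : Fin 2, M' u v
          * G T (m + 2) f (Fin.snoc (Fin.snoc (zf m k) u : Fin (m + 1) → Fin 2) v) := by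
        apply Finset.sum_congr rfl; intro u _
        apply Finset.sum_congr rfl; intro v _
        rw [hfv]
    _ = G T m (fun j => ∑ u : Fin 2, ∑ v : Fin 2,
          (Tᵀ * M' * T) u v * f (j + (u : ℕ) + (v : ℕ))) (zf m k) := key T f M' (zf m k)
    _ = 0 := by
        unfold G
        apply Finset.sum_eq_zero
        intro x _
        show (∏ i, T (zf m k i) (x i)) * (∑ u : Fin 2, ∑ v : Fin 2,
          (Tᵀ * M' * T) u v * f (wt x + (u : ℕ) + (v : ℕ))) = 0
        rw [hM (wt x) (by have := wt_le x; omega), mul_zero]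

lemma invRel {n : ℕ} (f f' : ℕ → ℂ) (T : Matrix (Fin 2) (Fin 2) ℂ) (hT : IsUnit T)
    (hf' : ∀ k ≤ n, f' k = G T n f (zf n k)) :
    ∀ k ≤ n, f k = G T⁻¹ n f' (zf n k) := by
  intro k hk
  have hdet : IsUnit T.det := (Matrix.isUnit_iff_isUnit_det T).mp hT
  have h1 : T⁻¹ * T = 1 := Matrix.nonsing_inv_mul T hdet
  have step : ∀ y : Fin n → Fin 2, f' (wt y) = G T n f y := by
    intro y
    rw [hf' _ (wt_le y), ← G_eq_zf]
  have hGG : G T⁻¹ n f' (zf n k)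
      = ∑ y : Fin n → Fin 2, (∏ i, T⁻¹ (zf n k i) (y i)) * G T n f y := by
    show (∑ y : Fin n → Fin 2, (∏ i, T⁻¹ (zf n k i) (y i)) * f' (wt y)) = _
    apply Finset.sum_congr rfl
    intro y _
    rw [step y]
  rw [hGG, inv_transform T⁻¹ T h1 f (zf n k), wt_zf hk]

lemma push {n : ℕ} (f f' : ℕ → ℂ) (T : Matrix (Fin 2) (Fin 2) ℂ) (hT : IsUnit T)
    (hf' : ∀ k ≤ n, f' k = G T n f (zf n k)) (a b c : ℂ) (habc : (a, b, c) ≠ 0)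
    (hrec : ∀ k, k + 2 ≤ n → a * f k + b * f (k + 1) + c * f (k + 2) = 0) :
    ∃ a' b' c' : ℂ, (a', b', c') ≠ 0 ∧
      b' ^ 2 - 4 * a' * c' = (T⁻¹.det) ^ 2 * (b ^ 2 - 4 * a * c) ∧
      ∀ k, k + 2 ≤ n → a' * f' k + b' * f' (k + 1) + c' * f' (k + 2) = 0 := by
  classical
  have hdet : IsUnit T.det := (Matrix.isUnit_iff_isUnit_det T).mp hT
  have h1 : T⁻¹ * T = 1 := Matrix.nonsing_inv_mul T hdet
  set M : Matrix (Fin 2) (Fin 2) ℂ := !![a, b/2; b/2, c] with hM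
  set M' : Matrix (Fin 2) (Fin 2) ℂ := (T⁻¹)ᵀ * M * T⁻¹ with hM'
  have Ma : M 0 0 = a := by simp [hM]
  have Mb : M 0 1 = b / 2 := by simp [hM]
  have Mb' : M 1 0 = b / 2 := by simp [hM]
  have Mc : M 1 1 = c := by simp [hM]
  have hN : Tᵀ * M' * T = M := by
    have e1 : Tᵀ * ((T⁻¹)ᵀ * M * T⁻¹) * T = Tᵀ * (T⁻¹)ᵀ * M * (T⁻¹ * T) := by
      simp only [Matrix.mul_assoc]
    rw [hM', e1, ← Matrix.transpose_mul, h1, Matrix.transpose_one, Matrix.one_mul,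
      Matrix.mul_one]
  have hMsym : Mᵀ = M := by
    ext i j
    fin_cases i <;> fin_cases j <;> simp [hM]
  have hM'sym : M'ᵀ = M' := by
    rw [hM', Matrix.transpose_mul, Matrix.transpose_mul, Matrix.transpose_transpose,
      hMsym, Matrix.mul_assoc]
  have h10 : M' 1 0 = M' 0 1 := by
    rw [show M' 0 1 = M'ᵀ 1 0 from rfl, hM'sym]
  refine ⟨M' 0 0, M' 0 1 + M' 1 0, M' 1 1, ?_, ?_, ?_⟩
  · intro h0
    have hcomp : M' 0 0 = 0 ∧ (M' 0 1 + M' 1 0 = 0 ∧ M' 1 1 = 0) := by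
      simpa [Prod.ext_iff] using h0
    have h01 : M' 0 1 = 0 := by
      have := hcomp.2.1
      rw [h10] at this
      linear_combination this / 2
    have h10' : M' 1 0 = 0 := by rw [h10]; exact h01
    have hM'0 : M' = 0 := by
      ext i j
      fin_cases i <;> fin_cases j <;>
        simp [hcomp.1, h01, h10', hcomp.2.2]
    have hM0 : M = 0 := by
      rw [← hN, hM'0, Matrix.mul_zero, Matrix.zero_mul]
    have ha : a = 0 := by rw [← Ma, hM0]; rfl
    have hb : b = 0 := by
      have : M 0 1 = 0 := by rw [hM0]; rfl
      rw [Mb] at this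
      linear_combination 2 * this
    have hc : c = 0 := by rw [← Mc, hM0]; rfl
    exact habc (by simp [ha, hb, hc, Prod.ext_iff])
  · have hdM' : M'.det = T⁻¹.det ^ 2 * M.det := by
      rw [hM', Matrix.det_mul, Matrix.det_mul, Matrix.det_transpose]
      ring
    have hdM : M.det = a * c - b / 2 * (b / 2) := by
      rw [hM, Matrix.det_fin_two_of]
    have hdet2 : M'.det = M' 0 0 * M' 1 1 - M' 0 1 * M' 1 0 := Matrix.det_fin_two M'
    have key2 : M' 0 0 * M' 1 1 - M' 0 1 * M' 1 0
        = T⁻¹.det ^ 2 * (a * c - b / 2 * (b / 2)) := by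
      rw [← hdet2, hdM', hdM]
    linear_combination (-4 : ℂ) * key2 + (M' 1 0 - M' 0 1) * h10
  · have hMrec : ∀ k, k + 2 ≤ n →
        ∑ u : Fin 2, ∑ v : Fin 2, (Tᵀ * M' * T) u v * f (k + (u : ℕ) + (v : ℕ)) = 0 := by
      intro k hk
      rw [hN]
      have e2 : k + 1 + 1 = k + 2 := by omega
      simp only [Fin.sum_univ_two, Fin.val_zero, Fin.val_one, add_zero, e2]
      rw [Ma, Mb, Mb', Mc]
      linear_combination hrec k hk
    intro k hk
    have hres := transfer f f' T hf' M' hMrec k hk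
    have e2 : k + 1 + 1 = k + 2 := by omega
    simp only [Fin.sum_univ_two, Fin.val_zero, Fin.val_one, add_zero, e2] at hres
    linear_combination hres

end Stmt2Aux

/-- **Invariance of second order recurrence relations under holographic transformations.**
Let `f` be a symmetric signature of arity `n` and let `f' = T^{⊗n} f` for an invertible
`2 × 2` matrix `T`, i.e.
`f' k = ∑_{x : Fin n → Fin 2} (∏ i, T (z k)_i (x i)) * f |x|`, where `(z k)_i = 1` iff
`i < k` and `|x|` is the number of ones among the coordinates of `x`.
Then `f` satisfies a second order recurrence relation iff `f'` does, and `f` satisfies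
one whose coefficients obey `b² - 4ac ≠ 0` iff `f'` does. -/
theorem stmt_2 (n : ℕ) (f f' : ℕ → ℂ) (T : Matrix (Fin 2) (Fin 2) ℂ)
    (hT : IsUnit T)
    (hf' : ∀ k ≤ n, f' k =
      ∑ x : Fin n → Fin 2,
        (∏ i : Fin n, T (if (i : ℕ) < k then 1 else 0) (x i)) *
          f ((Finset.univ.filter (fun i => x i = 1)).card)) :
    (HasSecondOrderRec n f ↔ HasSecondOrderRec n f') ∧
      (HasNondegSecondOrderRec n f ↔ HasNondegSecondOrderRec n f') := by
  classical
  have hfG : ∀ k ≤ n, f' k = Stmt2Aux.G T n f (Stmt2Aux.zf n k) := by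
    intro k hk
    rw [hf' k hk]
    unfold Stmt2Aux.G Stmt2Aux.zf
    apply Finset.sum_congr rfl
    intro x _
    rw [Stmt2Aux.card_filter_eq_wt]
  have hdet : IsUnit T.det := (Matrix.isUnit_iff_isUnit_det T).mp hT
  have h1 : T⁻¹ * T = 1 := Matrix.nonsing_inv_mul T hdet
  have h2 : T * T⁻¹ = 1 := Matrix.mul_nonsing_inv T hdet
  have hTinv : IsUnit T⁻¹ := ⟨⟨T⁻¹, T, h1, h2⟩, rfl⟩
  have hfInv : ∀ k ≤ n, f k = Stmt2Aux.G T⁻¹ n f' (Stmt2Aux.zf n k) :=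
    Stmt2Aux.invRel f f' T hT hfG
  have hd1 : (T⁻¹).det ≠ 0 :=
    ((Matrix.isUnit_iff_isUnit_det _).mp hTinv).ne_zero
  have hd2 : ((T⁻¹)⁻¹).det ≠ 0 := by
    have hdet1 : IsUnit (T⁻¹).det := (Matrix.isUnit_iff_isUnit_det _).mp hTinv
    have h1' : (T⁻¹)⁻¹ * T⁻¹ = 1 := Matrix.nonsing_inv_mul _ hdet1
    have h2' : T⁻¹ * (T⁻¹)⁻¹ = 1 := Matrix.mul_nonsing_inv _ hdet1
    exact ((Matrix.isUnit_iff_isUnit_det _).mp ⟨⟨(T⁻¹)⁻¹, T⁻¹, h1', h2'⟩, rfl⟩).ne_zero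
  constructor
  · constructor
    · rintro ⟨a, b, c, habc, hrec⟩
      obtain ⟨a', b', c', k1, _, k3⟩ := Stmt2Aux.push f f' T hT hfG a b c habc hrec
      exact ⟨a', b', c', k1, k3⟩
    · rintro ⟨a, b, c, habc, hrec⟩
      obtain ⟨a', b', c', k1, _, k3⟩ := Stmt2Aux.push f' f T⁻¹ hTinv hfInv a b c habc hrec
      exact ⟨a', b', c', k1, k3⟩
  · constructor
    · rintro ⟨a, b, c, habc, hdisc, hrec⟩
      obtain ⟨a', b', c', k1, k2, k3⟩ := Stmt2Aux.push f f' T hT hfG a b c habc hrec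
      refine ⟨a', b', c', k1, ?_, k3⟩
      rw [k2]
      exact mul_ne_zero (pow_ne_zero 2 hd1) hdisc
    · rintro ⟨a, b, c, habc, hdisc, hrec⟩
      obtain ⟨a', b', c', k1, k2, k3⟩ := Stmt2Aux.push f' f T⁻¹ hTinv hfInv a b c habc hrec
      refine ⟨a', b', c', k1, ?_, k3⟩
      rw [k2]
      exact mul_ne_zero (pow_ne_zero 2 hd2) hdisc
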